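/- Let Ω(r) = log(max(I(r),1)) where I = rD/H, and suppose for a.e. r in (a,b): −Ω'(r) ≤ C r^{γm−1} + C D(r)^{γ−1} D'(r) + C Σ(r) D'(r)/D(r)², with D nondecreasing, D(b) ≤ 1, Σ(r) ≤ C r^{m+2} and Σ'(r) ≥ 0, Σ(r)/D(r) bounded at both endpoints by C, and ∫ₐᵇ Σ'(r)/D(r) dr ≤ C. Then Ω(a) − Ω(b) ≤ C' for a constant C' depending only on C, γ, m. -/

import Mathlib

open MeasureTheory Set
set_option maxHeartbeats 1000000

/-- Abstract form of the final integration in the main frequency estimate: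
with `Ω = log (max (rD/H) 1)`, `-Ω' ≤ C r^{γm-1} + C D^{γ-1} D' + C Σ D'/D²`,
`D` nondecreasing with `D(b) ≤ 1`, `Σ(r) ≤ C r^{m+2}` nondecreasing, `Σ/D`
bounded by `C` at both endpoints and `∫ Σ'/D ≤ C`, one gets
`Ω(a) - Ω(b) ≤ C'` with `C'` depending only on `C, γ, m`. -/
theorem stmt_6 (C γ : ℝ) (m : ℕ) (hC : 0 < C) (hγ : 0 < γ) (hγ1 : γ ≤ 1) (hm : 1 ≤ m) :
    ∃ C' : ℝ, ∀ (a b : ℝ) (D D' Sig Sig' H Ω Ω' : ℝ → ℝ),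
      0 < a → a < b → b ≤ 3 →
      (∀ r ∈ Icc a b, HasDerivAt D (D' r) r) →
      (∀ r ∈ Icc a b, 0 ≤ D' r) →
      (∀ r ∈ Icc a b, 0 < D r) →
      D b ≤ 1 →
      (∀ r ∈ Icc a b, HasDerivAt Sig (Sig' r) r) →
      (∀ r ∈ Icc a b, 0 ≤ Sig' r) →
      (∀ r ∈ Icc a b, Sig r ≤ C * r ^ ((m : ℝ) + 2)) →
      Sig a ≤ C * D a → Sig b ≤ C * D b →
      (∫ r in a..b, Sig' r / D r) ≤ C →
      (∀ r ∈ Icc a b, 0 < H r) →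
      (∀ r, Ω r = Real.log (max (r * D r / H r) 1)) →
      ContinuousOn Ω (Icc a b) →
      (∀ r ∈ Ioo a b, HasDerivAt Ω (Ω' r) r) →
      (∀ r ∈ Ioo a b,
        -Ω' r ≤ C * r ^ (γ * (m : ℝ) - 1) + C * (D r) ^ (γ - 1) * D' r
                + C * Sig r * D' r / (D r)^2) →
      Ω a - Ω b ≤ C' := by
  refine ⟨C * 3 ^ m / γ + C / γ + C * C + C * C, ?_⟩
  intro a b D D' Sig Sig' H Ω Ω' ha hab hb3 hD hD' hDpos hDb hSig hSig' hSigle hSa hSb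
    hintSig hH hΩdef hΩcont hΩ' hbound
  clear hH hΩdef
  have hab' : a ≤ b := hab.le
  have haI : a ∈ Icc a b := left_mem_Icc.2 hab'
  have hbI : b ∈ Icc a b := right_mem_Icc.2 hab'
  have hm' : (1 : ℝ) ≤ (m : ℝ) := by exact_mod_cast hm
  have hγm : 0 < γ * (m : ℝ) := by nlinarith
  have hIoo : Ioo a b ⊆ Icc a b := Ioo_subset_Icc_self
  have hDa : 0 < D a := hDpos a haI
  have hDcont : ContinuousOn D (Icc a b) := fun r hr =>
    ((hD r hr).continuousAt).continuousWithinAt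
  have hSigcont : ContinuousOn Sig (Icc a b) := fun r hr =>
    ((hSig r hr).continuousAt).continuousWithinAt
  -- monotonicity of D and Sig
  have Dmono : MonotoneOn D (Icc a b) := by
    apply monotoneOn_of_hasDerivWithinAt_nonneg (convex_Icc a b) hDcont
    · intro x hx; rw [interior_Icc] at hx ⊢
      exact (hD x (hIoo hx)).hasDerivWithinAt
    · intro x hx; rw [interior_Icc] at hx
      exact hD' x (hIoo hx)
  have Sigmono : MonotoneOn Sig (Icc a b) := by
    apply monotoneOn_of_hasDerivWithinAt_nonneg (convex_Icc a b) hSigcont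
    · intro x hx; rw [interior_Icc] at hx ⊢
      exact (hSig x (hIoo hx)).hasDerivWithinAt
    · intro x hx; rw [interior_Icc] at hx
      exact hSig' x (hIoo hx)
  have hDa_le : ∀ r ∈ Icc a b, D a ≤ D r := fun r hr => Dmono haI hr hr.1
  have hD_le1 : ∀ r ∈ Icc a b, D r ≤ 1 := fun r hr =>
    le_trans (Dmono hr hbI hr.2) hDb
  -- uniform bound on |Sig|
  set M : ℝ := max (C * (3 : ℝ) ^ ((m : ℝ) + 2)) |Sig a| with hM
  have hMbound : ∀ r ∈ Icc a b, |Sig r| ≤ M := by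
    intro r hr
    have hr0 : 0 < r := lt_of_lt_of_le ha hr.1
    have hr3 : r ≤ 3 := le_trans hr.2 hb3
    have h1 : Sig r ≤ C * (3 : ℝ) ^ ((m : ℝ) + 2) := by
      refine le_trans (hSigle r hr) ?_
      have : r ^ ((m : ℝ) + 2) ≤ (3 : ℝ) ^ ((m : ℝ) + 2) :=
        Real.rpow_le_rpow hr0.le hr3 (by positivity)
      nlinarith
    have h2 : -M ≤ Sig r := by
      have := Sigmono haI hr hr.1
      have : -|Sig a| ≤ Sig a := neg_abs_le _
      have : |Sig a| ≤ M := le_max_right _ _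
      have hSa' := Sigmono haI hr hr.1
      nlinarith [neg_abs_le (Sig a), le_max_right (C * (3 : ℝ) ^ ((m : ℝ) + 2)) |Sig a|]
    rw [abs_le]
    exact ⟨h2, le_trans h1 (le_max_left _ _)⟩
  -- integrability of D' and Sig'
  have intD' : IntegrableOn D' (Icc a b) := by
    rw [integrableOn_Icc_iff_integrableOn_Ioc]
    exact intervalIntegral.integrableOn_deriv_of_nonneg hDcont
      (fun x hx => hD x (hIoo hx)) (fun x hx => hD' x (hIoo hx))
  have intSig' : IntegrableOn Sig' (Icc a b) := by
    rw [integrableOn_Icc_iff_integrableOn_Ioc]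
    exact intervalIntegral.integrableOn_deriv_of_nonneg hSigcont
      (fun x hx => hSig x (hIoo hx)) (fun x hx => hSig' x (hIoo hx))
  have measD : AEStronglyMeasurable D (volume.restrict (Icc a b)) :=
    hDcont.aestronglyMeasurable measurableSet_Icc
  have measSig : AEStronglyMeasurable Sig (volume.restrict (Icc a b)) :=
    hSigcont.aestronglyMeasurable measurableSet_Icc
  -- first summand: C r ^ (γ m - 1)
  set f1 : ℝ → ℝ := fun r => C * r ^ (γ * (m : ℝ) - 1) with hf1
  have intf1 : IntegrableOn f1 (Icc a b) := by
    apply ContinuousOn.integrableOn_Icc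
    apply ContinuousOn.mul continuousOn_const
    exact fun x hx => (Real.continuousAt_rpow_const x _
      (Or.inl (ne_of_gt (lt_of_lt_of_le ha hx.1)))).continuousWithinAt
  have hf1int : ∫ r in a..b, f1 r ≤ C * 3 ^ m / γ := by
    have hval : ∫ r in a..b, f1 r
        = C * ((b ^ (γ * (m : ℝ)) - a ^ (γ * (m : ℝ))) / (γ * (m : ℝ))) := by
      rw [hf1]
      rw [intervalIntegral.integral_const_mul, integral_rpow (Or.inl (by linarith))]
      norm_num
    rw [hval]
    have hb0 : 0 ≤ b := le_trans ha.le hab'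
    have h1 : b ^ (γ * (m : ℝ)) ≤ (3 : ℝ) ^ (γ * (m : ℝ)) :=
      Real.rpow_le_rpow hb0 hb3 hγm.le
    have h2 : (3 : ℝ) ^ (γ * (m : ℝ)) ≤ (3 : ℝ) ^ ((m : ℝ)) :=
      Real.rpow_le_rpow_of_exponent_le (by norm_num) (by nlinarith)
    have h3 : (3 : ℝ) ^ ((m : ℝ)) = (3 : ℝ) ^ m := Real.rpow_natCast 3 m
    have h4 : 0 ≤ a ^ (γ * (m : ℝ)) := Real.rpow_nonneg ha.le _
    have h5 : b ^ (γ * (m : ℝ)) - a ^ (γ * (m : ℝ)) ≤ (3:ℝ) ^ m := by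
      nlinarith
    have h6 : γ ≤ γ * (m : ℝ) := by nlinarith
    calc C * ((b ^ (γ * (m : ℝ)) - a ^ (γ * (m : ℝ))) / (γ * (m : ℝ)))
        ≤ C * ((3:ℝ) ^ m / (γ * (m : ℝ))) := by
          apply mul_le_mul_of_nonneg_left _ hC.le
          exact div_le_div_of_nonneg_right h5 hγm.le
      _ ≤ C * ((3:ℝ) ^ m / γ) := by
          apply mul_le_mul_of_nonneg_left _ hC.le
          apply div_le_div_of_nonneg_left (by positivity) hγ h6
      _ = C * 3 ^ m / γ := by ring
  -- second summand: E' = C D^(γ-1) D', antiderivative E = (C/γ) D^γ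
  set E : ℝ → ℝ := fun r => C / γ * D r ^ γ with hE
  set E' : ℝ → ℝ := fun r => C * D r ^ (γ - 1) * D' r with hE'
  have hEderiv : ∀ r ∈ Icc a b, HasDerivAt E (E' r) r := by
    intro r hr
    have h := HasDerivAt.const_mul (C / γ) ((hD r hr).rpow_const (p := γ) (Or.inl (ne_of_gt (hDpos r hr))))
    refine h.congr_deriv ?_
    show _ = C * D r ^ (γ - 1) * D' r
    field_simp
  have hE'nonneg : ∀ x ∈ Ioo a b, 0 ≤ E' x := by
    intro x hx
    have := hDpos x (hIoo hx)
    have := hD' x (hIoo hx)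
    have : 0 ≤ D x ^ (γ - 1) := Real.rpow_nonneg (hDpos x (hIoo hx)).le _
    positivity
  have intE' : IntegrableOn E' (Icc a b) := by
    rw [integrableOn_Icc_iff_integrableOn_Ioc]
    exact intervalIntegral.integrableOn_deriv_of_nonneg
      (fun r hr => (hEderiv r hr).continuousAt.continuousWithinAt)
      (fun x hx => hEderiv x (hIoo hx)) hE'nonneg
  have hE'int : ∫ r in a..b, E' r ≤ C / γ := by
    have := intervalIntegral.integral_eq_sub_of_hasDerivAt
      (f := E) (f' := E')
      (fun r hr => hEderiv r (by rwa [uIcc_of_le hab'] at hr))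
      ((intervalIntegrable_iff_integrableOn_Icc_of_le hab').2 intE')
    rw [this]
    have h1 : D b ^ γ ≤ 1 := Real.rpow_le_one (hDpos b hbI).le hDb hγ.le
    have h2 : 0 ≤ D a ^ γ := Real.rpow_nonneg hDa.le _
    rw [hE]
    have hCγ : 0 ≤ C / γ := by positivity
    calc C / γ * D b ^ γ - C / γ * D a ^ γ ≤ C / γ * 1 - 0 := by nlinarith
      _ = C / γ := by ring
  -- third summand: C Sig'/D
  set f3 : ℝ → ℝ := fun r => C * (Sig' r / D r) with hf3
  have intf3 : IntegrableOn f3 (Icc a b) := by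
    apply Integrable.mono' (intSig'.const_mul (C / D a))
    · simp only [hf3, div_eq_mul_inv]
      exact (aemeasurable_const.mul
        (intSig'.aemeasurable.mul measD.aemeasurable.inv)).aestronglyMeasurable
    · filter_upwards [ae_restrict_mem measurableSet_Icc] with r hr
      have h1 : 0 ≤ Sig' r := hSig' r hr
      have h2 : D a ≤ D r := hDa_le r hr
      have h3 : 0 < D r := hDpos r hr
      rw [Real.norm_eq_abs, abs_of_nonneg (by positivity)]
      have : Sig' r / D r ≤ Sig' r / D a := div_le_div_of_nonneg_left h1 hDa h2
      calc C * (Sig' r / D r) ≤ C * (Sig' r / D a) := by nlinarith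
        _ = C / D a * Sig' r := by ring
  have hf3int : ∫ r in a..b, f3 r ≤ C * C := by
    rw [hf3, intervalIntegral.integral_const_mul]
    nlinarith
  -- fourth summand: N' = derivative of N = -C Sig/D
  set N : ℝ → ℝ := fun r => -C * (Sig r / D r) with hN
  set N' : ℝ → ℝ := fun r => -C * ((Sig' r * D r - Sig r * D' r) / (D r * D r)) with hN'
  have hNderiv : ∀ r ∈ Icc a b, HasDerivAt N (N' r) r := by
    intro r hr
    have hd : D r ≠ 0 := ne_of_gt (hDpos r hr)
    have h := ((hSig r hr).div (hD r hr) hd).const_mul (-C)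
    refine h.congr_deriv ?_
    show _ = -C * ((Sig' r * D r - Sig r * D' r) / (D r * D r))
    ring
  have intN' : IntegrableOn N' (Icc a b) := by
    apply Integrable.mono' ((intSig'.add (intD'.const_mul M)).const_mul (C / (D a * D a)))
    · simp only [hN', div_eq_mul_inv]
      exact (aemeasurable_const.mul
        (((intSig'.aemeasurable.mul measD.aemeasurable).sub
          (measSig.aemeasurable.mul intD'.aemeasurable)).mul
          (measD.aemeasurable.mul measD.aemeasurable).inv)).aestronglyMeasurable
    · filter_upwards [ae_restrict_mem measurableSet_Icc] with r hr
      have h1 : 0 ≤ Sig' r := hSig' r hr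
      have h2 : 0 ≤ D' r := hD' r hr
      have h3 : 0 < D r := hDpos r hr
      have h4 : D r ≤ 1 := hD_le1 r hr
      have h5 : |Sig r| ≤ M := hMbound r hr
      have h6 : D a ≤ D r := hDa_le r hr
      have hnum : |Sig' r * D r - Sig r * D' r| ≤ Sig' r + M * D' r := by
        rw [abs_le]
        constructor
        · nlinarith [abs_le.1 h5]
        · nlinarith [abs_le.1 h5]
      have hMnn : 0 ≤ M := le_trans (abs_nonneg _) h5
      rw [hN', Real.norm_eq_abs, abs_mul, abs_neg, abs_of_pos hC, abs_div,
        abs_of_pos (by positivity : (0:ℝ) < D r * D r)]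
      have hden : D a * D a ≤ D r * D r := by nlinarith
      have hdenpos : 0 < D a * D a := by positivity
      calc C * (|Sig' r * D r - Sig r * D' r| / (D r * D r))
          ≤ C * ((Sig' r + M * D' r) / (D a * D a)) := by
            apply mul_le_mul_of_nonneg_left _ hC.le
            apply div_le_div₀ (by nlinarith) hnum hdenpos hden
        _ = C / (D a * D a) * (Sig' r + M * D' r) := by ring
  have hNint : ∫ r in a..b, N' r = N b - N a :=
    intervalIntegral.integral_eq_sub_of_hasDerivAt
      (fun r hr => hNderiv r (by rwa [uIcc_of_le hab'] at hr))
      ((intervalIntegrable_iff_integrableOn_Icc_of_le hab').2 intN')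
  -- helper: interval integrability
  have ii : ∀ {f : ℝ → ℝ}, IntegrableOn f (Icc a b) → IntervalIntegrable f volume a b :=
    fun h => (intervalIntegrable_iff_integrableOn_Icc_of_le hab').2 h
  -- case split on sign of Sig b
  rcases le_or_gt 0 (Sig b) with hSb0 | hSb0
  · -- Sig b ≥ 0 : full decomposition
    set φ : ℝ → ℝ := fun r => f1 r + E' r + f3 r + N' r with hφ
    have intφ : IntegrableOn φ (Icc a b) := ((intf1.add intE').add intf3).add intN'
    have key : Ω a - Ω b ≤ ∫ r in a..b, φ r := by
      have := intervalIntegral.sub_le_integral_of_hasDeriv_right_of_le hab' hΩcont.neg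
        (g' := fun r => -Ω' r)
        (fun x hx => ((hΩ' x hx).neg).hasDerivWithinAt) intφ ?_
      · simp only [Pi.neg_apply] at this
        linarith
      · intro x hx
        have hd : D x ≠ 0 := ne_of_gt (hDpos x (hIoo hx))
        have heq : φ x = C * x ^ (γ * (m:ℝ) - 1) + C * D x ^ (γ - 1) * D' x
            + C * Sig x * D' x / (D x) ^ 2 := by
          simp only [hφ, hf1, hE', hf3, hN']
          field_simp
          ring
        show -Ω' x ≤ φ x
        rw [heq]
        exact hbound x hx
    have hsplit : ∫ r in a..b, φ r
        = (∫ r in a..b, f1 r) + (∫ r in a..b, E' r) + (∫ r in a..b, f3 r)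
          + (∫ r in a..b, N' r) := by
      rw [hφ]
      rw [intervalIntegral.integral_add (((ii intf1).add (ii intE')).add (ii intf3)) (ii intN'),
        intervalIntegral.integral_add ((ii intf1).add (ii intE')) (ii intf3),
        intervalIntegral.integral_add (ii intf1) (ii intE')]
    have hN4 : ∫ r in a..b, N' r ≤ C * C := by
      rw [hNint, hN]
      have h1 : Sig a / D a ≤ C := (div_le_iff₀ hDa).2 (by linarith)
      have h2 : 0 ≤ Sig b / D b := div_nonneg hSb0 (hDpos b hbI).le
      have : -C * (Sig b / D b) ≤ 0 := by nlinarith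
      have : -C * (Sig a / D a) ≥ -C * C := by nlinarith
      nlinarith
    rw [hsplit] at key
    linarith
  · -- Sig b < 0 : the Sig-term is nonpositive
    set φ : ℝ → ℝ := fun r => f1 r + E' r with hφ
    have intφ : IntegrableOn φ (Icc a b) := intf1.add intE'
    have key : Ω a - Ω b ≤ ∫ r in a..b, φ r := by
      have := intervalIntegral.sub_le_integral_of_hasDeriv_right_of_le hab' hΩcont.neg
        (g' := fun r => -Ω' r)
        (fun x hx => ((hΩ' x hx).neg).hasDerivWithinAt) intφ ?_
      · simp only [Pi.neg_apply] at this
        linarith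
      · intro x hx
        have hSx : Sig x ≤ Sig b := Sigmono (hIoo hx) hbI (hIoo hx).2
        have hSx0 : Sig x < 0 := lt_of_le_of_lt hSx hSb0
        have hnum : C * Sig x * D' x ≤ 0 :=
          mul_nonpos_iff.mpr (Or.inr ⟨mul_nonpos_iff.mpr (Or.inl ⟨hC.le, hSx0.le⟩),
            hD' x (hIoo hx)⟩)
        have hterm : C * Sig x * D' x / (D x) ^ 2 ≤ 0 :=
          div_nonpos_of_nonpos_of_nonneg hnum (sq_nonneg _)
        have heq : φ x = C * x ^ (γ * (m:ℝ) - 1) + C * D x ^ (γ - 1) * D' x := by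
          simp only [hφ, hf1, hE']
        show -Ω' x ≤ φ x
        rw [heq]
        linarith [hbound x hx]
    have hsplit : ∫ r in a..b, φ r = (∫ r in a..b, f1 r) + (∫ r in a..b, E' r) := by
      rw [hφ, intervalIntegral.integral_add (ii intf1) (ii intE')]
    rw [hsplit] at key
    nlinarith [hf1int, hE'int]
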